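/- Let C be a right rigid Krull–Schmidt monoidal category, and let 𝓑 = { X ∈ inde C | C(𝟙,X) ≠ 0 }. Assume there exists X ∈ 𝓑 such that C(𝟙,X) is not a simple left C(X,X)-module. Then P_𝟙 has subfunctors which are not trace submodules, and consequently the decategorification map Ob : TId(C) → Id([C]_⊕) is not an isomorphism. -/

import Mathlib

open CategoryTheory CategoryTheory.Limits CategoryTheory.MonoidalCategory

namespace TIP

attribute [local instance] CategoryTheory.Limits.hasBinaryBiproducts_of_finite_biproducts

universe v u v₂ u₂

section DirectSummand

variable {C : Type u} [Category.{v} C]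

/-- `X` is a direct summand of `Y` (i.e. `X` is a retract of `Y`). -/
def IsDirectSummand (X Y : C) : Prop := ∃ (i : X ⟶ Y) (r : Y ⟶ X), i ≫ r = 𝟙 X

end DirectSummand

section Submod

variable {C : Type u} [Category.{v} C] [Preadditive C]

/-- A subfunctor (submodule) of the representable module `P_Z = C(Z, -)`. -/
structure Submod (Z : C) where
  carrier : ∀ X : C, AddSubgroup (Z ⟶ X)
  map_mem : ∀ {X Y : C} (f : X ⟶ Y) {φ : Z ⟶ X}, φ ∈ carrier X → φ ≫ f ∈ carrier Y

theorem Submod.ext' {Z : C} {M N : Submod Z} (h : M.carrier = N.carrier) : M = N := by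
  cases M; cases N; cases h; rfl

instance {Z : C} : PartialOrder (Submod Z) where
  le M N := ∀ X : C, M.carrier X ≤ N.carrier X
  le_refl M X := le_rfl
  le_trans M N P h h' X := (h X).trans (h' X)
  le_antisymm M N h h' := Submod.ext' (funext fun X => le_antisymm (h X) (h' X))

/-- Post-composition with a fixed morphism, as an additive map. -/
def postcompHom (Z : C) {X Y : C} (f : X ⟶ Y) : (Z ⟶ X) →+ (Z ⟶ Y) where
  toFun g := g ≫ f
  map_zero' := Limits.zero_comp
  map_add' a b := Preadditive.add_comp _ _ _ _ _ _

/-- The trace submodule `Tr_S P_Z` of the representable module `P_Z`, for a class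
of objects `S`. -/
def traceSub (Z : C) (S : Set C) : Submod Z where
  carrier Y := AddSubgroup.closure {h : Z ⟶ Y | ∃ W ∈ S, ∃ (b : Z ⟶ W) (a : W ⟶ Y), h = b ≫ a}
  map_mem := by
    intro X Y f φ hφ
    have h1 : postcompHom Z f φ ∈ (AddSubgroup.closure
        {h : Z ⟶ X | ∃ W ∈ S, ∃ (b : Z ⟶ W) (a : W ⟶ X), h = b ≫ a}).map (postcompHom Z f) :=
      AddSubgroup.mem_map_of_mem _ hφ
    rw [AddMonoidHom.map_closure] at h1
    refine AddSubgroup.closure_mono ?_ h1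
    rintro x ⟨h, ⟨W, hW, b, a, rfl⟩, rfl⟩
    exact ⟨W, hW, b, a ≫ f, by simp [postcompHom]⟩

/-- The action of the endomorphism ring `C(X,X)` on `C(Z,X)` by post-composition. -/
instance endSMul {Z X : C} : SMul (End X) (Z ⟶ X) := ⟨fun e φ => φ ≫ e⟩

theorem end_smul_def {Z X : C} (e : End X) (φ : Z ⟶ X) : e • φ = φ ≫ e := rfl

/-- `C(Z,X)` is a left module over the endomorphism ring `C(X,X)`. -/
instance endModule {Z X : C} : Module (End X) (Z ⟶ X) where
  one_smul φ := by simp [end_smul_def, End.one_def]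
  mul_smul e f φ := by simp [end_smul_def, End.mul_def]
  smul_zero e := by simp [end_smul_def]
  smul_add e φ ψ := Preadditive.add_comp _ _ _ _ _ _
  add_smul e f φ := Preadditive.comp_add _ _ _ _ _ _
  zero_smul φ := by simp [end_smul_def]

end Submod

section KS

variable {C : Type u} [Category.{v} C] [Preadditive C] [HasBinaryBiproducts C]

/-- An object of an additive category is indecomposable if it is nonzero and
any decomposition as a biproduct has a zero summand. -/
def Indecomposable (X : C) : Prop :=
  ¬ IsZero X ∧ ∀ Y Z : C, Nonempty (X ≅ Y ⊞ Z) → IsZero Y ∨ IsZero Z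

end KS

section KS2

variable (C : Type u) [Category.{v} C] [Preadditive C] [HasFiniteBiproducts C]

/-- A Krull-Schmidt category: every object is a finite biproduct of indecomposable
objects, and indecomposable objects have local endomorphism rings. -/
structure IsKrullSchmidt : Prop where
  local_end : ∀ X : C, Indecomposable X → IsLocalRing (End X)
  decomp : ∀ X : C, ∃ (n : ℕ) (f : Fin n → C),
    (∀ i, Indecomposable (f i)) ∧ Nonempty (X ≅ ⨁ f)

end KS2

section Monoidal

variable {C : Type u} [Category.{v} C] [MonoidalCategory C]

/-- A right dual `(X^∨, ev_X, co_X)` of an object `X`, with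
`ev_X : X ⊗ X^∨ ⟶ 𝟙` and `co_X : 𝟙 ⟶ X^∨ ⊗ X` satisfying the zigzag identities. -/
structure RightDual (X : C) where
  dual : C
  ev : X ⊗ dual ⟶ 𝟙_ C
  coev : 𝟙_ C ⟶ dual ⊗ X
  zigzag₁ : (ρ_ X).inv ≫ (X ◁ coev) ≫ (α_ X dual X).inv ≫ (ev ▷ X) ≫ (λ_ X).hom = 𝟙 X
  zigzag₂ : (λ_ dual).inv ≫ (coev ▷ dual) ≫ (α_ dual X dual).hom ≫ (dual ◁ ev) ≫ (ρ_ dual).hom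
      = 𝟙 dual

/-- The map `ι_{XY} : C(𝟙, X^∨ ⊗ Y) → C(X, Y)`, `φ ↦ (ev_X ⊗ 1_Y) ∘ (1_X ⊗ φ)`,
defined in terms of the raw data of a dual object and an evaluation morphism. -/
def iotaRaw {X : C} (Xd : C) (ev : X ⊗ Xd ⟶ 𝟙_ C) {Y : C} (φ : 𝟙_ C ⟶ Xd ⊗ Y) : X ⟶ Y :=
  (ρ_ X).inv ≫ (X ◁ φ) ≫ (α_ X Xd Y).inv ≫ (ev ▷ Y) ≫ (λ_ Y).hom

/-- The isomorphism `ι_{XY} : C(𝟙, X^∨ ⊗ Y) → C(X, Y)`, `φ ↦ (ev_X ⊗ 1_Y) ∘ (1_X ⊗ φ)`. -/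
def iota {X : C} (D : RightDual X) {Y : C} (φ : 𝟙_ C ⟶ D.dual ⊗ Y) : X ⟶ Y :=
  iotaRaw D.dual D.ev φ

/-- The inverse of `ι_{XY}`, given by `f ↦ (1_{X^∨} ⊗ f) ∘ co_X`. -/
def iotaInv {X : C} (D : RightDual X) {Y : C} (f : X ⟶ Y) : 𝟙_ C ⟶ D.dual ⊗ Y :=
  D.coev ≫ (D.dual ◁ f)

end Monoidal

section TId

variable (C : Type u) [Category.{v} C] [Preadditive C] [MonoidalCategory C]

/-- A left-tensor ideal in a preadditive monoidal category. -/
structure TensorIdeal where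
  carrier : ∀ X Y : C, AddSubgroup (X ⟶ Y)
  comp_pre : ∀ {W X Y : C} (g : W ⟶ X) {f : X ⟶ Y}, f ∈ carrier X Y → g ≫ f ∈ carrier W Y
  comp_post : ∀ {X Y Z : C} {f : X ⟶ Y} (h : Y ⟶ Z), f ∈ carrier X Y → f ≫ h ∈ carrier X Z
  whisker_mem : ∀ (Z : C) {X Y : C} {f : X ⟶ Y}, f ∈ carrier X Y →
    Z ◁ f ∈ carrier (Z ⊗ X) (Z ⊗ Y)

variable {C}

theorem TensorIdeal.ext' {J K : TensorIdeal C} (h : J.carrier = K.carrier) : J = K := by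
  cases J; cases K; cases h; rfl

instance : PartialOrder (TensorIdeal C) where
  le J K := ∀ X Y : C, J.carrier X Y ≤ K.carrier X Y
  le_refl J X Y := le_rfl
  le_trans J K L h h' X Y := (h X Y).trans (h' X Y)
  le_antisymm J K h h' :=
    TensorIdeal.ext' (funext fun X => funext fun Y => le_antisymm (h X Y) (h' X Y))

variable (C)

/-- The tensor ideal of all morphisms. -/
def TensorIdeal.top : TensorIdeal C where
  carrier _ _ := ⊤
  comp_pre := by intros; exact AddSubgroup.mem_top _
  comp_post := by intros; exact AddSubgroup.mem_top _
  whisker_mem := by intros; exact AddSubgroup.mem_top _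

variable {C}

/-- `Ψ` maps a tensor ideal `J` to the subfunctor `J(𝟙, -)` of the principal module
`P_𝟙 = C(𝟙, -)`. -/
def Psi (J : TensorIdeal C) : Submod (𝟙_ C) where
  carrier X := J.carrier (𝟙_ C) X
  map_mem := by intro X Y f φ hφ; exact J.comp_post f hφ

variable (C) [MonoidalPreadditive C]

/-- The zero tensor ideal. -/
def TensorIdeal.bot : TensorIdeal C where
  carrier _ _ := ⊥
  comp_pre := by
    intro W X Y g f hf
    rw [AddSubgroup.mem_bot] at *
    rw [hf, Limits.comp_zero]
  comp_post := by
    intro X Y Z f h hf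
    rw [AddSubgroup.mem_bot] at *
    rw [hf, Limits.zero_comp]
  whisker_mem := by
    intro Z X Y f hf
    rw [AddSubgroup.mem_bot] at *
    rw [hf, MonoidalPreadditive.whiskerLeft_zero]

end TId

section Thick

variable (C : Type u) [Category.{v} C] [Preadditive C] [MonoidalCategory C]
  [HasBinaryBiproducts C]

/-- A thick left-tensor Ob-ideal: an isomorphism closed class of objects, closed under
direct sums, direct summands, and tensoring on the left by arbitrary objects. -/
structure ThickIdeal where
  carrier : Set C
  iso_mem : ∀ {X Y : C}, (X ≅ Y) → X ∈ carrier → Y ∈ carrier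
  biprod_mem_iff : ∀ X Y : C, ((X ⊞ Y) ∈ carrier ↔ (X ∈ carrier ∧ Y ∈ carrier))
  tensor_mem : ∀ (Y : C) {X : C}, X ∈ carrier → (Y ⊗ X) ∈ carrier

variable {C}

theorem ThickIdeal.ext' {I I' : ThickIdeal C} (h : I.carrier = I'.carrier) : I = I' := by
  cases I; cases I'; cases h; rfl

instance : PartialOrder (ThickIdeal C) where
  le I I' := I.carrier ⊆ I'.carrier
  le_refl I := Set.Subset.refl _
  le_trans I I' I'' h h' := Set.Subset.trans h h'
  le_antisymm I I' h h' := ThickIdeal.ext' (le_antisymm h h')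

/-- The decategorification map `Ob`, sending a tensor ideal `J` to the thick
left-tensor Ob-ideal of objects `X` with `1_X ∈ J(X,X)`. -/
def obIdeal (J : TensorIdeal C) : ThickIdeal C where
  carrier := {X : C | 𝟙 X ∈ J.carrier X X}
  iso_mem := by
    intro X Y e hX
    have h := J.comp_pre e.inv (J.comp_post e.hom hX)
    simpa using h
  biprod_mem_iff := by
    intro X Y
    constructor
    · intro h
      constructor
      · have h1 := J.comp_pre (biprod.inl : X ⟶ X ⊞ Y) (J.comp_post (biprod.fst : X ⊞ Y ⟶ X) h)
        simpa using h1
      · have h1 := J.comp_pre (biprod.inr : Y ⟶ X ⊞ Y) (J.comp_post (biprod.snd : X ⊞ Y ⟶ Y) h)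
        simpa using h1
    · rintro ⟨hX, hY⟩
      have h1 := J.comp_pre (biprod.fst : X ⊞ Y ⟶ X) (J.comp_post (biprod.inl : X ⟶ X ⊞ Y) hX)
      have h2 := J.comp_pre (biprod.snd : X ⊞ Y ⟶ Y) (J.comp_post (biprod.inr : Y ⟶ X ⊞ Y) hY)
      simp only [Category.id_comp] at h1 h2
      have h3 := AddSubgroup.add_mem _ h1 h2
      rw [biprod.total] at h3
      exact h3
  tensor_mem := by
    intro Y X hX
    have h := J.whisker_mem Y hX
    simpa using h

end Thick

section Braided

variable {C : Type u} [Category.{v} C] [MonoidalCategory C] [BraidedCategory C]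

/-- The trace of an endomorphism, with respect to a choice of right duals. -/
def traceMor (D : ∀ X : C, RightDual X) {X : C} (f : X ⟶ X) : 𝟙_ C ⟶ 𝟙_ C :=
  (D X).coev ≫ ((D X).dual ◁ f) ≫ (β_ (D X).dual X).hom ≫ (D X).ev

end Braided



section AuxLocal

variable {R : Type u₂} [Ring R] [IsLocalRing R]

theorem aux_isUnit_of_mul_eq_one {x y : R} (h : x * y = 1) : IsUnit x ∧ IsUnit y := by
  have he : (y * x) * (y * x) = y * x := by
    rw [mul_assoc, ← mul_assoc x y x, h, one_mul]
  rcases IsLocalRing.isUnit_or_isUnit_of_add_one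
      (show (y * x) + (1 - y * x) = 1 by abel) with hu | hu
  · have h1 : y * x = 1 := hu.mul_left_cancel (by rw [mul_one]; exact he)
    exact ⟨⟨⟨x, y, h, h1⟩, rfl⟩, ⟨⟨y, x, h1, h⟩, rfl⟩⟩
  · exfalso
    have hz : (1 - y * x) * (y * x) = 0 := by
      rw [sub_mul, one_mul, he, sub_self]
    have h2 : (1 - y * x) * (1 - y * x) = (1 - y * x) * 1 := by
      rw [mul_one, mul_sub, mul_one, hz, sub_zero]
    have h3 : (1 : R) - y * x = 1 := hu.mul_left_cancel h2
    have h4 : y * x = 0 := by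
      have := sub_eq_self.mp h3
      simpa using this
    have h5 : y = 0 := by
      calc y = y * (x * y) := by rw [h, mul_one]
        _ = (y * x) * y := by rw [mul_assoc]
        _ = 0 := by rw [h4, zero_mul]
    exact one_ne_zero (α := R) (by rw [← h, h5, mul_zero])

theorem aux_not_isUnit_mul_left {x : R} (hx : ¬ IsUnit x) (y : R) : ¬ IsUnit (x * y) := by
  intro h
  obtain ⟨u, hu⟩ := h
  exact hx (aux_isUnit_of_mul_eq_one (x := x) (y := y * ↑u⁻¹)
    (by rw [← mul_assoc, ← hu, Units.mul_inv])).1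

theorem aux_not_isUnit_add {x y : R} (hx : ¬ IsUnit x) (hy : ¬ IsUnit y) : ¬ IsUnit (x + y) := by
  intro h
  obtain ⟨u, hu⟩ := h
  rcases IsLocalRing.isUnit_or_isUnit_of_add_one (a := x * ↑u⁻¹) (b := y * ↑u⁻¹)
      (by rw [← add_mul, ← hu, Units.mul_inv]) with h' | h'
  · exact hx (by simpa [Units.inv_mul_cancel_right] using h'.mul u.isUnit)
  · exact hy (by simpa [Units.inv_mul_cancel_right] using h'.mul u.isUnit)

theorem aux_isUnit_one_sub {x : R} (hx : ¬ IsUnit x) : IsUnit (1 - x) :=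
  (IsLocalRing.isUnit_or_isUnit_of_add_one (show x + (1 - x) = 1 by abel)).resolve_left hx

end AuxLocal

section AuxClosure

variable {C : Type u} [Category.{v} C] [Preadditive C]

/-- Precomposition with a fixed morphism, as an additive map. -/
def precompHom {Z X Y : C} (g : Z ⟶ X) : (X ⟶ Y) →+ (Z ⟶ Y) where
  toFun f := g ≫ f
  map_zero' := Limits.comp_zero
  map_add' a b := Preadditive.comp_add _ _ _ _ _ _

theorem closure_postcomp_le {Z W Y : C} (G : Set (Z ⟶ W)) (a : W ⟶ Y)
    (P : AddSubgroup (Z ⟶ Y)) (hgen : ∀ g ∈ G, g ≫ a ∈ P)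
    {b : Z ⟶ W} (hb : b ∈ AddSubgroup.closure G) : b ≫ a ∈ P := by
  have h1 := AddSubgroup.mem_map_of_mem (postcompHom Z a) hb
  rw [AddMonoidHom.map_closure] at h1
  refine (AddSubgroup.closure_le P).mpr ?_ h1
  rintro x ⟨g, hg, rfl⟩
  exact hgen g hg

theorem closure_precomp_le {Z W Y : C} (G : Set (W ⟶ Y)) (g0 : Z ⟶ W)
    (P : AddSubgroup (Z ⟶ Y)) (hgen : ∀ g ∈ G, g0 ≫ g ∈ P)
    {f : W ⟶ Y} (hf : f ∈ AddSubgroup.closure G) : g0 ≫ f ∈ P := by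
  have h1 := AddSubgroup.mem_map_of_mem (precompHom g0) hf
  rw [AddMonoidHom.map_closure] at h1
  refine (AddSubgroup.closure_le P).mpr ?_ h1
  rintro x ⟨g, hg, rfl⟩
  exact hgen g hg

variable [MonoidalCategory C] [MonoidalPreadditive C]

/-- Left whiskering, as an additive map. -/
def whiskerHom (Z : C) (X Y : C) : (X ⟶ Y) →+ (Z ⊗ X ⟶ Z ⊗ Y) where
  toFun f := Z ◁ f
  map_zero' := MonoidalPreadditive.whiskerLeft_zero
  map_add' f g := MonoidalPreadditive.whiskerLeft_add f g

theorem closure_whisker_le {A B : C} (G : Set (A ⟶ B)) (Z : C)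
    (P : AddSubgroup (Z ⊗ A ⟶ Z ⊗ B)) (hgen : ∀ g ∈ G, Z ◁ g ∈ P)
    {f : A ⟶ B} (hf : f ∈ AddSubgroup.closure G) : Z ◁ f ∈ P := by
  have h1 := AddSubgroup.mem_map_of_mem (whiskerHom Z A B) hf
  rw [AddMonoidHom.map_closure] at h1
  refine (AddSubgroup.closure_le P).mpr ?_ h1
  rintro x ⟨g, hg, rfl⟩
  exact hgen g hg

end AuxClosure

section AuxSlide

variable {C : Type u} [Category.{v} C] [MonoidalCategory C]

theorem aux_slide' {Z Y : C} (g : 𝟙_ C ⟶ Z) (f : 𝟙_ C ⟶ Y) :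
    g ≫ (ρ_ Z).inv ≫ (Z ◁ f) = f ≫ (λ_ Y).inv ≫ (g ▷ Y) := by
  rw [← Category.assoc, rightUnitor_inv_naturality, ← Category.assoc, leftUnitor_inv_naturality,
    Category.assoc, Category.assoc, ← MonoidalCategory.tensorHom_def, ← tensorHom_def', unitors_inv_equal]

theorem aux_unit_slide {Z Y : C} (b : 𝟙_ C ⟶ Z ⊗ 𝟙_ C) (f : 𝟙_ C ⟶ Y) :
    b ≫ (Z ◁ f) = f ≫ ((λ_ Y).inv ≫ ((b ≫ (ρ_ Z).hom) ▷ Y)) := by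
  conv_lhs => rw [show b = (b ≫ (ρ_ Z).hom) ≫ (ρ_ Z).inv by simp]
  rw [Category.assoc, aux_slide']

end AuxSlide

section AuxSubmod

variable {C : Type u} [Category.{v} C] [Preadditive C] [MonoidalCategory C]

/-- The subfunctor of `P_𝟙` generated by a set of morphisms `𝟙 ⟶ X`. -/
def submodGen {X : C} (T : Set (𝟙_ C ⟶ X)) : Submod (𝟙_ C) where
  carrier Y := AddSubgroup.closure {h : 𝟙_ C ⟶ Y | ∃ n ∈ T, ∃ a : X ⟶ Y, h = n ≫ a}
  map_mem := by
    intro Y Y' f φ hφ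
    refine closure_postcomp_le _ f _ ?_ hφ
    rintro g ⟨n, hn, a, rfl⟩
    exact AddSubgroup.subset_closure ⟨n, hn, a ≫ f, by simp⟩

variable [MonoidalPreadditive C]

/-- The tensor ideal associated to a subfunctor of `P_𝟙`. -/
def Phi (M : Submod (𝟙_ C)) : TensorIdeal C where
  carrier A B :=
    { carrier := {f : A ⟶ B | ∀ (Z : C) (b : 𝟙_ C ⟶ Z ⊗ A), b ≫ (Z ◁ f) ∈ M.carrier (Z ⊗ B)}
      add_mem' := by
        intro f g hf hg Z b
        rw [MonoidalPreadditive.whiskerLeft_add, Preadditive.comp_add]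
        exact AddSubgroup.add_mem _ (hf Z b) (hg Z b)
      zero_mem' := by
        intro Z b
        rw [MonoidalPreadditive.whiskerLeft_zero, Limits.comp_zero]
        exact AddSubgroup.zero_mem _
      neg_mem' := by
        intro f hf Z b
        have hneg : Z ◁ (-f) = -(Z ◁ f) := map_neg (whiskerHom Z A B) f
        rw [hneg, Preadditive.comp_neg]
        exact AddSubgroup.neg_mem _ (hf Z b) }
  comp_pre := by
    intro W A B g f hf Z b
    rw [MonoidalCategory.whiskerLeft_comp, ← Category.assoc]
    exact hf Z (b ≫ (Z ◁ g))
  comp_post := by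
    intro A B B' f h hf Z b
    rw [MonoidalCategory.whiskerLeft_comp, ← Category.assoc]
    exact M.map_mem _ (hf Z b)
  whisker_mem := by
    intro U A B f hf Z b
    rw [tensor_whiskerLeft_symm]
    have h1 := hf (Z ⊗ U) (b ≫ (α_ Z U A).inv)
    have h2 := M.map_mem (α_ Z U B).hom h1
    simpa using h2

theorem Phi_unit (M : Submod (𝟙_ C)) (Y : C) : (Phi M).carrier (𝟙_ C) Y = M.carrier Y := by
  ext f
  constructor
  · intro hf
    have h1 := hf (𝟙_ C) (λ_ (𝟙_ C)).inv
    have h2 : (λ_ (𝟙_ C)).inv ≫ (𝟙_ C ◁ f) = f ≫ (λ_ Y).inv :=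
      (leftUnitor_inv_naturality f).symm
    rw [h2] at h1
    have h3 := M.map_mem (λ_ Y).hom h1
    simpa using h3
  · intro hf Z b
    rw [aux_unit_slide b f]
    exact M.map_mem _ hf

/-- The tensor ideal generated by a tensor-closed class of objects. -/
def genIdeal (S : Set C) (hS : ∀ (Z V : C), V ∈ S → (Z ⊗ V) ∈ S) : TensorIdeal C where
  carrier A B := AddSubgroup.closure
    {h : A ⟶ B | ∃ W ∈ S, ∃ (b : A ⟶ W) (a : W ⟶ B), h = b ≫ a}
  comp_pre := by
    intro W A B g f hf
    refine closure_precomp_le _ g _ ?_ hf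
    rintro x ⟨V, hV, b, a, rfl⟩
    exact AddSubgroup.subset_closure ⟨V, hV, g ≫ b, a, by simp⟩
  comp_post := by
    intro A B B' f h hf
    refine closure_postcomp_le _ h _ ?_ hf
    rintro x ⟨V, hV, b, a, rfl⟩
    exact AddSubgroup.subset_closure ⟨V, hV, b, a ≫ h, by simp⟩
  whisker_mem := by
    intro Z A B f hf
    refine closure_whisker_le _ Z _ ?_ hf
    rintro x ⟨V, hV, b, a, rfl⟩
    exact AddSubgroup.subset_closure
      ⟨Z ⊗ V, hS Z V hV, Z ◁ b, Z ◁ a, by rw [MonoidalCategory.whiskerLeft_comp]⟩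

end AuxSubmod


section Statement

variable (C : Type u) [Category.{v} C] [Preadditive C] [MonoidalCategory C]
  [MonoidalPreadditive C] [HasFiniteBiproducts C]

/-- **Proposition.** Let `C` be a right rigid Krull-Schmidt monoidal category.
If there exists an indecomposable `X` with `C(𝟙,X) ≠ 0` which is not a simple left
`C(X,X)`-module, then `P_𝟙` has subfunctors which are not trace submodules, and
consequently the decategorification map `Ob : TId(C) → Id([C]_⊕)` is not an isomorphism. -/
theorem not_simple_implies_Ob_not_iso
    (hrigid : ∀ X : C, Nonempty (RightDual X)) (hKS : IsKrullSchmidt C)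
    (X : C) (hXind : Indecomposable X) (hXB : ∃ φ : 𝟙_ C ⟶ X, φ ≠ 0)
    (hnotsimple : ¬ IsSimpleModule (End X) (𝟙_ C ⟶ X)) :
    (∃ M : Submod (𝟙_ C), ∀ S : Set C, M ≠ traceSub (𝟙_ C) S) ∧
    ¬ (Function.Bijective (obIdeal (C := C)) ∧
        ∀ J K : TensorIdeal C, J ≤ K ↔ obIdeal J ≤ obIdeal K) := by
  classical
  haveI hloc : IsLocalRing (End X) := hKS.local_end X hXind
  obtain ⟨φd, hφd⟩ := hXB
  have hbt : (⊥ : Submodule (End X) (𝟙_ C ⟶ X)) ≠ ⊤ := by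
    intro h
    have hmem : φd ∈ (⊥ : Submodule (End X) (𝟙_ C ⟶ X)) := h.symm ▸ Submodule.mem_top
    exact hφd (by simpa using hmem)
  haveI : Nontrivial (Submodule (End X) (𝟙_ C ⟶ X)) := ⟨⊥, ⊤, hbt⟩
  have hex : ∃ N₀ : Submodule (End X) (𝟙_ C ⟶ X), N₀ ≠ ⊥ ∧ N₀ ≠ ⊤ := by
    by_contra h
    push_neg at h
    exact hnotsimple { toIsSimpleOrder := ⟨fun a => by
      rcases eq_or_ne a ⊥ with h' | h'
      · exact Or.inl h'
      · exact Or.inr (h a h')⟩ }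
  obtain ⟨N₀, hN₀b, hN₀t⟩ := hex
  obtain ⟨φ₀, hφ₀N, hφ₀⟩ := (Submodule.ne_bot_iff N₀).mp hN₀b
  obtain ⟨ψ, hψ⟩ : ∃ ψ : 𝟙_ C ⟶ X, ψ ∉ N₀ := by
    by_contra h
    push_neg at h
    exact hN₀t (Submodule.eq_top_iff'.mpr h)
  set N : Submodule (End X) (𝟙_ C ⟶ X) := Submodule.span (End X) {φ₀} with hNdef
  have hNle : N ≤ N₀ := Submodule.span_le.mpr (by simpa using hφ₀N)
  set M : Submod (𝟙_ C) := submodGen {n : 𝟙_ C ⟶ X | n ∈ N} with hMdef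
  have hφ₀M : φ₀ ∈ M.carrier X :=
    AddSubgroup.subset_closure
      ⟨φ₀, Submodule.mem_span_singleton_self φ₀, 𝟙 X, (Category.comp_id φ₀).symm⟩
  have hMX : ∀ h ∈ M.carrier X, h ∈ N := by
    intro h hh
    have hle : AddSubgroup.closure
        {h : 𝟙_ C ⟶ X | ∃ n ∈ {n : 𝟙_ C ⟶ X | n ∈ N}, ∃ a : X ⟶ X, h = n ≫ a} ≤
        N.toAddSubgroup := by
      refine (AddSubgroup.closure_le _).mpr ?_
      rintro x ⟨n, hn, a, rfl⟩
      exact N.smul_mem (a : End X) hn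
    exact hle hh
  have key : ∀ S : Set C, M ≠ traceSub (𝟙_ C) S := by
    intro S hEq
    have hc : ∀ Y : C, M.carrier Y = (traceSub (𝟙_ C) S).carrier Y := fun Y => by rw [hEq]
    by_cases hP : ∃ W ∈ S, ∃ (u : X ⟶ W) (v : W ⟶ X), IsUnit (M := End X) (u ≫ v)
    · obtain ⟨W, hW, u, v, huv⟩ := hP
      obtain ⟨e', he'⟩ : ∃ e' : X ⟶ X, (u ≫ v) ≫ e' = 𝟙 X := by
        obtain ⟨w, hw⟩ := huv
        refine ⟨w.inv, ?_⟩
        rw [← hw]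
        exact w.inv_mul
      have hψtr : ψ ∈ (traceSub (𝟙_ C) S).carrier X := by
        refine AddSubgroup.subset_closure ⟨W, hW, ψ ≫ u, v ≫ e', ?_⟩
        have hassoc : (ψ ≫ u) ≫ v ≫ e' = ψ ≫ (u ≫ v) ≫ e' := by simp
        rw [hassoc, he', Category.comp_id]
      have hmem : ψ ∈ N := hMX ψ (by rw [hc X]; exact hψtr)
      exact hψ (hNle hmem)
    · push_neg at hP
      set Nm : AddSubgroup (𝟙_ C ⟶ X) :=
        { carrier := {h : 𝟙_ C ⟶ X | ∃ s : X ⟶ X, ¬ IsUnit (M := End X) s ∧ h = φ₀ ≫ s}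
          add_mem' := by
            rintro h₁ h₂ ⟨s, hs, rfl⟩ ⟨t, ht, rfl⟩
            exact ⟨s + t, aux_not_isUnit_add hs ht, by simp⟩
          zero_mem' := ⟨0, not_isUnit_zero (M₀ := End X), by simp⟩
          neg_mem' := by
            rintro h ⟨s, hs, rfl⟩
            exact ⟨-s, fun hu => hs (by simpa using hu.neg), by simp⟩ }
        with hNmdef
      have htr_le : ∀ h ∈ (traceSub (𝟙_ C) S).carrier X, h ∈ Nm := by
        intro h hh
        refine (AddSubgroup.closure_le Nm).mpr ?_ hh
        rintro x ⟨W, hW, b, a, rfl⟩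
        have hb : b ∈ M.carrier W := by
          rw [hc W]
          exact AddSubgroup.subset_closure ⟨W, hW, b, 𝟙 W, (Category.comp_id b).symm⟩
        refine closure_postcomp_le _ a Nm ?_ hb
        rintro g ⟨n, hn, c, rfl⟩
        obtain ⟨r, hr⟩ := Submodule.mem_span_singleton.mp hn
        refine ⟨r ≫ (c ≫ a), ?_, ?_⟩
        · exact aux_not_isUnit_mul_left (hP W hW c a) r
        · have hn' : n = φ₀ ≫ r := by rw [← hr]; rfl
          rw [hn']
          simp
      have hφ₀Nm : φ₀ ∈ Nm := htr_le φ₀ (by rw [← hc X]; exact hφ₀M)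
      obtain ⟨s, hs, hfact⟩ := hφ₀Nm
      have hu1 : IsUnit (M := End X) (𝟙 X - s) := aux_isUnit_one_sub hs
      obtain ⟨t, ht⟩ : ∃ t : X ⟶ X, (𝟙 X - s) ≫ t = 𝟙 X := by
        obtain ⟨w, hw⟩ := hu1
        refine ⟨w.inv, ?_⟩
        rw [← hw]
        exact w.inv_mul
      have hzero : φ₀ = 0 := by
        calc φ₀ = φ₀ ≫ 𝟙 X := (Category.comp_id φ₀).symm
          _ = φ₀ ≫ ((𝟙 X - s) ≫ t) := by rw [ht]
          _ = (φ₀ ≫ (𝟙 X - s)) ≫ t := (Category.assoc _ _ _).symm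
          _ = 0 := by
              rw [Preadditive.comp_sub, Category.comp_id, ← hfact, sub_self, Limits.zero_comp]
      exact hφ₀ hzero
  refine ⟨⟨M, key⟩, ?_⟩
  rintro ⟨hbij, hord⟩
  set J : TensorIdeal C := Phi M with hJdef
  set I : ThickIdeal C := obIdeal J with hIdef
  set K : TensorIdeal C := genIdeal I.carrier (fun Z V hV => I.tensor_mem Z hV) with hKdef
  have hKJ : K ≤ J := by
    intro A B
    refine (AddSubgroup.closure_le _).mpr ?_
    rintro x ⟨V, hV, g, a, rfl⟩
    have h1 : (𝟙 V) ≫ a ∈ J.carrier V B := J.comp_post a hV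
    rw [Category.id_comp] at h1
    exact J.comp_pre g h1
  have hJK : obIdeal J ≤ obIdeal K := by
    intro V hV
    exact AddSubgroup.subset_closure ⟨V, hV, 𝟙 V, 𝟙 V, (Category.comp_id _).symm⟩
  have hJeqK : J = K := le_antisymm ((hord J K).mpr hJK) hKJ
  refine key I.carrier (Submod.ext' (funext fun Y => ?_))
  have h1 : M.carrier Y = J.carrier (𝟙_ C) Y := (Phi_unit M Y).symm
  rw [h1, hJeqK]
  rfl

end Statement

end TIP
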